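/- Let f ∈ ℚ[x_1,…,x_d] have maximum total degree D, let Q ⊂ ℝ^d be a polytope of dimension d' ≤ d with all vertices in ℤ^d, and let k ≥ D·d'. Then f is constant on Q if and only if f is constant on Q ∩ (1/k)ℤ^d. -/

import Mathlib

open MvPolynomial Finset

/-- A multivariate polynomial over `ℝ` in finitely many variables, each of individual
degree at most `D`, which vanishes on the natural-number grid `{0,…,D}^n`, is zero. -/
private lemma grid_vanish : ∀ (n D : ℕ) (g : MvPolynomial (Fin n) ℝ),
    (∀ i, g.degreeOf i ≤ D) →
    (∀ t : Fin n → ℕ, (∀ i, t i ≤ D) → MvPolynomial.eval (fun i => (t i : ℝ)) g = 0) →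
    g = 0 := by
  intro n
  induction n with
  | zero =>
    intro D g _ hz
    obtain ⟨r, rfl⟩ := MvPolynomial.C_surjective (Fin 0) g
    have := hz finZeroElim (fun i => i.elim0)
    rw [eval_C] at this
    rw [this, map_zero]
  | succ n ih =>
    intro D g hdeg hz
    have key : ∀ i : ℕ, (finSuccEquiv ℝ n g).coeff i = 0 := by
      intro i
      apply ih D
      · intro j
        exact (degreeOf_coeff_finSuccEquiv g j i).trans (hdeg j.succ)
      · intro t ht
        set x : Fin n → ℝ := fun j => (t j : ℝ) with hxdef
        have hQ : (finSuccEquiv ℝ n g).map (MvPolynomial.eval x) = 0 := by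
          apply Polynomial.eq_zero_of_natDegree_lt_card_of_eval_eq_zero' _
            ((Finset.range (D + 1)).image (Nat.cast : ℕ → ℝ))
          · intro y hy
            simp only [Finset.mem_image, Finset.mem_range] at hy
            obtain ⟨m, hm, rfl⟩ := hy
            rw [← eval_eq_eval_mv_eval']
            have hcast : (Fin.cons (m : ℝ) x : Fin (n + 1) → ℝ)
                = fun j => (((Fin.cons m t : Fin (n+1) → ℕ) j : ℕ) : ℝ) := by
              funext j
              refine Fin.cases ?_ ?_ j <;> simp [hxdef]
            rw [hcast]
            exact hz _ (fun j => by
              refine Fin.cases ?_ ?_ j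
              · simpa using Nat.lt_succ_iff.mp hm
              · intro j'; simpa using ht j')
          · have h1 : ((Finset.range (D + 1)).image (Nat.cast : ℕ → ℝ)).card = D + 1 := by
              rw [Finset.card_image_of_injective _ Nat.cast_injective, Finset.card_range]
            rw [h1]
            calc ((finSuccEquiv ℝ n g).map (MvPolynomial.eval x)).natDegree
                ≤ (finSuccEquiv ℝ n g).natDegree := Polynomial.natDegree_map_le
              _ = degreeOf 0 g := natDegree_finSuccEquiv g
              _ ≤ D := hdeg 0
              _ < D + 1 := Nat.lt_succ_self D
        have := congrArg (fun P => Polynomial.coeff P i) hQ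
        simpa [Polynomial.coeff_map] using this
    apply (finSuccEquiv ℝ n).injective
    rw [map_zero]
    exact Polynomial.ext fun i => by rw [key i, Polynomial.coeff_zero]

private lemma totalDegree_subst_le {m n : ℕ} (s : Fin m → MvPolynomial (Fin n) ℝ)
    (hs : ∀ j, (s j).totalDegree ≤ 1) (h : MvPolynomial (Fin m) ℝ) :
    (MvPolynomial.bind₁ s h).totalDegree ≤ h.totalDegree := by
  rw [MvPolynomial.bind₁, MvPolynomial.aeval_def, MvPolynomial.eval₂_eq']
  refine (totalDegree_finset_sum _ _).trans (Finset.sup_le ?_)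
  intro m' hm'
  calc ((algebraMap ℝ (MvPolynomial (Fin n) ℝ)) (h.coeff m') *
        ∏ i, s i ^ m' i).totalDegree
      ≤ ((algebraMap ℝ (MvPolynomial (Fin n) ℝ)) (h.coeff m')).totalDegree
        + (∏ i, s i ^ m' i).totalDegree := totalDegree_mul _ _
    _ ≤ 0 + ∑ i, (s i ^ m' i).totalDegree := by
        gcongr
        · exact le_of_eq (totalDegree_C _)
        · exact totalDegree_finset_prod _ _
    _ ≤ ∑ i, m' i * 1 := by
        rw [zero_add]
        exact Finset.sum_le_sum fun i _ =>
          (totalDegree_pow _ _).trans (by gcongr; exact hs i)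
    _ = ∑ i, m' i := by simp
    _ ≤ h.totalDegree := by
        rw [← Finsupp.sum_fintype m' (fun _ e => e) (fun _ => rfl)]
        exact le_totalDegree hm'

open MvPolynomial in
theorem constant_on_polytope_iff_constant_on_grid
    (d d' D k : ℕ) (hk : D * d' ≤ k) (hkpos : 0 < k)
    (f : MvPolynomial (Fin d) ℚ) (hdeg : f.totalDegree ≤ D)
    (V : Finset (Fin d → ℝ)) (hV : V.Nonempty)
    (hVint : ∀ v ∈ V, ∀ i, ∃ n : ℤ, v i = (n : ℝ))
    (hdim : Module.finrank ℝ
      (affineSpan ℝ (convexHull ℝ (V : Set (Fin d → ℝ)))).direction = d') :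
    (∃ c : ℝ, ∀ x ∈ convexHull ℝ (V : Set (Fin d → ℝ)), aeval x f = c) ↔
    (∃ c : ℝ, ∀ x ∈ convexHull ℝ (V : Set (Fin d → ℝ)),
      (∀ i, ∃ n : ℤ, x i = (n : ℝ) / k) → aeval x f = c) := by
  constructor
  · rintro ⟨c, hc⟩
    exact ⟨c, fun x hx _ => hc x hx⟩
  rintro ⟨c, hc⟩
  refine ⟨c, ?_⟩
  obtain ⟨v0, hv0⟩ := hV
  set S : Set (Fin d → ℝ) := (V : Set (Fin d → ℝ)) with hSdef
  have hv0S : v0 ∈ S := hv0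
  have hkR : (0 : ℝ) < (k : ℝ) := by exact_mod_cast hkpos
  -- the vector span of `S` has rank `d'`
  have hWrank : Module.finrank ℝ (vectorSpan ℝ S) = d' := by
    rw [affineSpan_convexHull, direction_affineSpan] at hdim
    exact hdim
  -- choose a spanning, linearly independent family of difference vectors
  obtain ⟨b, hbT, hbspan, hbli⟩ :=
    exists_linearIndependent ℝ ((fun v => v - v0) '' S)
  have hTspan : Submodule.span ℝ ((fun v => v - v0) '' S) = vectorSpan ℝ S := by
    rw [vectorSpan_eq_span_vsub_set_right ℝ hv0S]
    rfl
  have hbfin : b.Finite := ((V.finite_toSet.image _).subset hbT)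
  have : Fintype b := hbfin.fintype
  have hbcard : b.toFinset.card = d' := by
    rw [← finrank_span_set_eq_card hbli, hbspan, hTspan, hWrank]
  set e := (Fintype.equivFinOfCardEq (by rwa [Set.toFinset_card] at hbcard) :
    b ≃ Fin d')
  set w : Fin d' → (Fin d → ℝ) := fun i => ((e.symm i : b) : Fin d → ℝ) with hwdef
  have hwmem : ∀ i, w i ∈ b := fun i => (e.symm i).2
  have hwrange : Set.range w = b := by
    ext x
    constructor
    · rintro ⟨i, rfl⟩; exact hwmem i
    · intro hx; exact ⟨e ⟨x, hx⟩, by simp [hwdef]⟩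
  have hwspan : Submodule.span ℝ (Set.range w) = vectorSpan ℝ S := by
    rw [hwrange, hbspan, hTspan]
  -- choose vertices `u i` with `w i = u i - v0`
  have hwT : ∀ i, ∃ v, v ∈ S ∧ v - v0 = w i := fun i => by
    obtain ⟨v, hv, hveq⟩ := hbT (hwmem i)
    exact ⟨v, hv, hveq⟩
  choose u huS huw using hwT
  -- integer coordinates
  choose a0 ha0 using hVint v0 hv0
  have haint : ∀ i, ∀ j, ∃ n : ℤ, u i j = (n : ℝ) := fun i => hVint (u i) (huS i)
  choose a ha using haint
  -- polynomial setup over ℝ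
  set f' : MvPolynomial (Fin d) ℝ := MvPolynomial.map (algebraMap ℚ ℝ) f with hf'def
  have haeval : ∀ x : Fin d → ℝ, (aeval x f : ℝ) = eval x f' := fun x => by
    rw [hf'def, MvPolynomial.eval_map, MvPolynomial.aeval_def]
  have hf'deg : f'.totalDegree ≤ D := by
    refine le_trans ?_ hdeg
    rw [totalDegree, totalDegree]
    exact Finset.sup_mono (support_map_subset _ _)
  set h : MvPolynomial (Fin d) ℝ := f' - C c with hhdef
  have hhdeg : h.totalDegree ≤ D := (totalDegree_sub_C_le _ _).trans hf'deg
  set s : Fin d → MvPolynomial (Fin d') ℝ :=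
    fun j => C (v0 j) + ∑ i, C (w i j / k) * X i with hsdef
  have hsdeg : ∀ j, (s j).totalDegree ≤ 1 := by
    intro j
    rw [hsdef]
    refine (totalDegree_add _ _).trans (max_le (by simp) ?_)
    refine (totalDegree_finset_sum _ _).trans (Finset.sup_le fun i _ => ?_)
    refine (totalDegree_mul _ _).trans ?_
    simp [totalDegree_X]
  set g : MvPolynomial (Fin d') ℝ := MvPolynomial.bind₁ s h with hgdef
  have hgdeg : ∀ i, g.degreeOf i ≤ D :=
    fun i => (degreeOf_le_totalDegree _ _).trans
      ((totalDegree_subst_le s hsdeg h).trans hhdeg)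
  have hgeval : ∀ t : Fin d' → ℝ,
      eval t g = eval (fun j => v0 j + ∑ i, w i j / k * t i) h := by
    intro t
    have hsj : (fun j => eval t (s j)) = fun j => v0 j + ∑ i, w i j / k * t i := by
      funext j
      simp [hsdef]
    calc eval t g = eval (fun j => eval t (s j)) h :=
          eval₂Hom_bind₁ (RingHom.id ℝ) t s h
      _ = _ := by rw [hsj]
  -- the polynomial `g` vanishes on the grid, hence is zero
  have hg0 : g = 0 := by
    apply grid_vanish d' D g hgdeg
    intro t ht
    rw [hgeval]
    set x : Fin d → ℝ := fun j => v0 j + ∑ i, w i j / k * ((t i : ℕ) : ℝ) with hxdef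
    have hwj : ∀ i j, w i j = u i j - v0 j := fun i j => by
      rw [← huw i]; rfl
    have hsumle : (∑ i, (t i : ℝ)) ≤ (k : ℝ) := by
      calc ∑ i, (t i : ℝ) ≤ ∑ _i : Fin d', (D : ℝ) :=
            Finset.sum_le_sum fun i _ => by exact_mod_cast ht i
        _ = (D : ℝ) * d' := by simp [mul_comm]
        _ ≤ k := by exact_mod_cast hk
    have hxhull : x ∈ convexHull ℝ S := by
      have hconv : Convex ℝ (convexHull ℝ S) := convex_convexHull ℝ S
      have hmem := hconv.sum_mem (t := (Finset.univ : Finset (Fin (d' + 1))))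
        (w := Fin.cons (1 - ∑ i, (t i : ℝ) / k) (fun i => (t i : ℝ) / k))
        (z := Fin.cons v0 u) ?_ ?_ ?_
      · have hxeq : x = ∑ i : Fin (d' + 1),
            (Fin.cons (1 - ∑ i, (t i : ℝ) / k) (fun i => (t i : ℝ) / k) :
              Fin (d' + 1) → ℝ) i • (Fin.cons v0 u : Fin (d' + 1) → Fin d → ℝ) i := by
          rw [Fin.sum_univ_succ]
          simp only [Fin.cons_zero, Fin.cons_succ]
          funext j
          simp only [hxdef, Pi.add_apply, Pi.smul_apply, smul_eq_mul,
            Finset.sum_apply]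
          simp only [hwj]
          have e1 : ∑ i, (u i j - v0 j) / (k : ℝ) * (t i : ℝ)
              = (∑ i, (t i : ℝ) / k * u i j) - (∑ i, (t i : ℝ) / k) * v0 j := by
            rw [Finset.sum_mul, ← Finset.sum_sub_distrib]
            exact Finset.sum_congr rfl fun i _ => by ring
          rw [e1]
          ring
        rw [hxeq]
        exact hmem
      · intro i _
        refine Fin.cases ?_ ?_ i
        · simp only [Fin.cons_zero, sub_nonneg]
          rw [← Finset.sum_div]
          exact (div_le_one hkR).mpr hsumle
        · intro i'
          simp only [Fin.cons_succ]
          positivity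
      · rw [Fin.sum_univ_succ]
        simp only [Fin.cons_zero, Fin.cons_succ]
        ring
      · intro i _
        refine Fin.cases ?_ ?_ i
        · exact subset_convexHull ℝ S hv0S
        · exact fun i' => subset_convexHull ℝ S (huS i')
    have hxgrid : ∀ j, ∃ n : ℤ, x j = (n : ℝ) / k := by
      intro j
      refine ⟨k * a0 j + ∑ i, (t i : ℤ) * (a i j - a0 j), ?_⟩
      have hwj' : ∀ i, w i j = (a i j : ℝ) - a0 j := fun i => by
        rw [hwj i j, ha i j, ha0 j]
      rw [hxdef]
      simp only [hwj', ha0]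
      push_cast
      rw [add_div]
      congr 1
      · field_simp
      · rw [Finset.sum_div]
        exact Finset.sum_congr rfl fun i _ => by field_simp
    have hval := hc x hxhull hxgrid
    rw [haeval x] at hval
    rw [hhdef]
    rw [map_sub, eval_C, hval, sub_self]
  -- conclude: `f` is constant on the hull
  intro x hx
  have hxspan : x - v0 ∈ vectorSpan ℝ S := by
    have hx' : x ∈ affineSpan ℝ S := convexHull_subset_affineSpan S hx
    have hv0' : v0 ∈ affineSpan ℝ S := subset_affineSpan ℝ S hv0S
    have := AffineSubspace.vsub_mem_direction hx' hv0'
    rwa [direction_affineSpan] at this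
  rw [← hwspan, Submodule.mem_span_range_iff_exists_fun] at hxspan
  obtain ⟨r, hr⟩ := hxspan
  have h0 := congrArg (eval (fun i => (k : ℝ) * r i)) hg0
  rw [hgeval, map_zero] at h0
  have hxeq : (fun j => v0 j + ∑ i, w i j / (k : ℝ) * ((k : ℝ) * r i)) = x := by
    funext j
    have hj := congrFun hr j
    simp only [Finset.sum_apply, Pi.smul_apply, smul_eq_mul, Pi.sub_apply] at hj
    have e1 : ∑ i, w i j / (k : ℝ) * ((k : ℝ) * r i) = ∑ i, r i * w i j :=
      Finset.sum_congr rfl fun i _ => by field_simp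
    rw [e1, hj]
    ring
  rw [hxeq] at h0
  rw [haeval x]
  have h1 : eval x f' - c = 0 := by
    rw [hhdef] at h0
    simpa [map_sub, eval_C] using h0
  linarith
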